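/- arXiv:1904.09332 — 2 statements merged into one kernel-verified Lean document; each statement's English description precedes it below -/
import Mathlib

section
/- Let S and M be symmetric positive definite real N×N matrices, f ∈ ℝ^N, and for y ≥ 0 set w₋(y) := (S + e^{-y} M)^{-1} f and w₊(y) := (e^{-y} S + M)^{-1} f. Fix s ∈ (0,1) and put s₋ := 1-s, s₊ := s, β₀(t) := sin(πt)/(πt). Let (y_{j,σ}, τ_{j,σ})_{j=1}^{M_σ}, σ ∈ {+,-}, be quadrature rules with nonnegative nodes and weights. Define ũ(s) := Σ_σ β₀(s_σ) ∫₀^∞ w_σ(y/s_σ) e^{-y} dy and u(s) := Σ_σ β₀(s_σ) Σ_{j=1}^{M_σ} τ_{j,σ} w_σ(y_{j,σ}/s_σ). With g_Q(a,b) := | ∫₀^∞ e^{-y}/(1 + a e^{-b y}) dy − Σ_{j=1}^{Q} τ_j/(1 + a e^{-b y_j}) | (computed with the corresponding rule), I₋ := [1/λ_max(S,M), 1/λ_min(S,M)], I₊ := [λ_min(S,M), λ_max(S,M)], and G_σ(M_σ, s) := β₀(s_σ) · sup_{a ∈ I_σ} g_{M_σ}(a, 1/s_σ), the following holds: ‖u(s)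 − ũ(s)‖_M ≤ max(1, 1/λ_min(S,M)) · ‖f‖_{M^{-1}} · ( G₋(M₋, s) + G₊(M₊, s) ). -/
open Matrix MeasureTheory Real Set

/-- The smallest generalized eigenvalue of the pair `(S, M)`:
`λ_min(S, M) = inf_{x ≠ 0} (xᵀ S x)/(xᵀ M x)`. -/
noncomputable def lamMinGen {N : ℕ} (S M : Matrix (Fin N) (Fin N) ℝ) : ℝ :=
  sInf ((fun x : Fin N → ℝ => (x ⬝ᵥ S.mulVec x) / (x ⬝ᵥ M.mulVec x)) '' {x | x ≠ 0})

/-- The largest generalized eigenvalue of the pair `(S, M)`: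
`λ_max(S, M) = sup_{x ≠ 0} (xᵀ S x)/(xᵀ M x)`. -/
noncomputable def lamMaxGen {N : ℕ} (S M : Matrix (Fin N) (Fin N) ℝ) : ℝ :=
  sSup ((fun x : Fin N → ℝ => (x ⬝ᵥ S.mulVec x) / (x ⬝ᵥ M.mulVec x)) '' {x | x ≠ 0})

/-- The `M`-norm `‖x‖_M = √(xᵀ M x)`. -/
noncomputable def normWeighted {N : ℕ} (M : Matrix (Fin N) (Fin N) ℝ) (x : Fin N → ℝ) : ℝ :=
  Real.sqrt (x ⬝ᵥ M.mulVec x)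

/-- `w₋(y) = (S + e^{-y} M)⁻¹ f`. -/
noncomputable def wMinus {N : ℕ} (S M : Matrix (Fin N) (Fin N) ℝ) (f : Fin N → ℝ)
    (y : ℝ) : Fin N → ℝ :=
  (S + Real.exp (-y) • M)⁻¹.mulVec f

/-- `w₊(y) = (e^{-y} S + M)⁻¹ f`. -/
noncomputable def wPlus {N : ℕ} (S M : Matrix (Fin N) (Fin N) ℝ) (f : Fin N → ℝ)
    (y : ℝ) : Fin N → ℝ :=
  (Real.exp (-y) • S + M)⁻¹.mulVec f

/-- `β₀(t) = sin(πt)/(πt)`. -/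
noncomputable def beta0 (t : ℝ) : ℝ := Real.sin (Real.pi * t) / (Real.pi * t)

/-- Scalar quadrature error `g(a,b)` for the rule `(y_j, τ_j)_{j=1}^Q`:
`g(a,b) = |∫₀^∞ e^{-y}/(1 + a e^{-by}) dy − Σ_j τ_j/(1 + a e^{-b y_j})|`. -/
noncomputable def gQuad (Q : ℕ) (y τ : Fin Q → ℝ) (a b : ℝ) : ℝ :=
  |(∫ t in Set.Ioi (0:ℝ), Real.exp (-t) / (1 + a * Real.exp (-b * t))) -
    ∑ j, τ j / (1 + a * Real.exp (-b * y j))|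

/-! ### Auxiliary lemmas -/

/-- The Euclidean norm on `Fin N → ℝ`. -/
noncomputable def enorm2 {N : ℕ} (x : Fin N → ℝ) : ℝ :=
  norm (WithLp.toLp 2 x : EuclideanSpace ℝ (Fin N))

lemma enorm2_eq_sqrt {N : ℕ} (x : Fin N → ℝ) : enorm2 x = Real.sqrt (x ⬝ᵥ x) := by
  rw [enorm2, EuclideanSpace.norm_eq]
  congr 1
  simp [dotProduct, sq_abs, sq]

lemma enorm2_nonneg {N : ℕ} (x : Fin N → ℝ) : 0 ≤ enorm2 x := norm_nonneg _

lemma enorm2_add_le {N : ℕ} (x y : Fin N → ℝ) : enorm2 (x + y) ≤ enorm2 x + enorm2 y :=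
  by unfold enorm2; rw [WithLp.toLp_add]; exact norm_add_le _ _

lemma enorm2_smul {N : ℕ} (c : ℝ) (x : Fin N → ℝ) : enorm2 (c • x) = |c| * enorm2 x := by
  rw [enorm2, WithLp.toLp_smul, norm_smul, Real.norm_eq_abs]; rfl

lemma enorm2_le_of_abs_le {N : ℕ} {x y : Fin N → ℝ} {C : ℝ} (hC : 0 ≤ C)
    (h : ∀ i, |x i| ≤ C * |y i|) : enorm2 x ≤ C * enorm2 y := by
  rw [enorm2_eq_sqrt, enorm2_eq_sqrt, ← Real.sqrt_sq hC, ← Real.sqrt_mul (sq_nonneg C)]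
  apply Real.sqrt_le_sqrt
  rw [dotProduct, dotProduct, Finset.mul_sum]
  refine Finset.sum_le_sum fun i _ => ?_
  have hi := h i
  calc x i * x i = |x i| * |x i| := (abs_mul_abs_self _).symm
    _ ≤ (C * |y i|) * (C * |y i|) :=
        mul_le_mul hi hi (abs_nonneg _) (by positivity)
    _ = C ^ 2 * (y i * y i) := by rw [← abs_mul_abs_self (y i)]; ring

lemma vecMul_eq_transpose_mulVec {N : ℕ} (B : Matrix (Fin N) (Fin N) ℝ) (v : Fin N → ℝ) :
    v ᵥ* B = Bᵀ *ᵥ v := by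
  have := Matrix.vecMul_transpose Bᵀ v
  simpa using this

lemma dot_sym_move {N : ℕ} {B : Matrix (Fin N) (Fin N) ℝ} (hB : Bᵀ = B) (v w : Fin N → ℝ) :
    v ⬝ᵥ (B *ᵥ w) = (B *ᵥ v) ⬝ᵥ w := by
  rw [Matrix.dotProduct_mulVec, vecMul_eq_transpose_mulVec, hB]

lemma dot_mulVec_self {N : ℕ} {V : Matrix (Fin N) (Fin N) ℝ} (hV : Vᵀ * V = 1) (x : Fin N → ℝ) :
    (V *ᵥ x) ⬝ᵥ (V *ᵥ x) = x ⬝ᵥ x := by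
  rw [Matrix.dotProduct_mulVec, show V *ᵥ x = x ᵥ* Vᵀ from (Matrix.vecMul_transpose V x).symm,
    Matrix.vecMul_vecMul, hV, Matrix.vecMul_one]

lemma integrableOn_res_minus (μ b : ℝ) (hμ : 0 < μ) :
    IntegrableOn (fun t : ℝ => Real.exp (-t) * (μ + Real.exp (-(b * t)))⁻¹) (Set.Ioi (0:ℝ)) := by
  have hexp : IntegrableOn (fun t : ℝ => Real.exp (-t)) (Set.Ioi (0:ℝ)) := by
    simpa [neg_one_mul] using exp_neg_integrableOn_Ioi 0 one_pos
  have hcont : Continuous fun t : ℝ => Real.exp (-t) * (μ + Real.exp (-(b * t)))⁻¹ := by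
    refine (Real.continuous_exp.comp continuous_neg).mul (Continuous.inv₀ (by continuity) ?_)
    intro t; positivity
  refine ((hexp.const_mul μ⁻¹).mono' hcont.aestronglyMeasurable ?_)
  filter_upwards with t
  rw [Real.norm_eq_abs, abs_mul, abs_of_pos (Real.exp_pos _), abs_inv,
    abs_of_pos (by positivity : (0:ℝ) < μ + Real.exp (-(b * t))), mul_comm μ⁻¹]
  have h1 : μ ≤ μ + Real.exp (-(b * t)) := le_add_of_nonneg_right (Real.exp_pos _).le
  exact mul_le_mul_of_nonneg_left (inv_anti₀ hμ h1) (Real.exp_pos _).le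

lemma integrableOn_res_plus (μ b : ℝ) (hμ : 0 ≤ μ) :
    IntegrableOn (fun t : ℝ => Real.exp (-t) * (Real.exp (-(b * t)) * μ + 1)⁻¹) (Set.Ioi (0:ℝ)) := by
  have hexp : IntegrableOn (fun t : ℝ => Real.exp (-t)) (Set.Ioi (0:ℝ)) := by
    simpa [neg_one_mul] using exp_neg_integrableOn_Ioi 0 one_pos
  have hcont : Continuous fun t : ℝ => Real.exp (-t) * (Real.exp (-(b * t)) * μ + 1)⁻¹ := by
    refine (Real.continuous_exp.comp continuous_neg).mul (Continuous.inv₀ (by continuity) ?_)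
    intro t; positivity
  refine (hexp.mono' hcont.aestronglyMeasurable ?_)
  filter_upwards with t
  rw [Real.norm_eq_abs, abs_mul, abs_of_pos (Real.exp_pos _), abs_inv,
    abs_of_pos (by positivity : (0:ℝ) < Real.exp (-(b * t)) * μ + 1)]
  have h1 : (1:ℝ) ≤ Real.exp (-(b * t)) * μ + 1 := le_add_of_nonneg_left (by positivity)
  calc Real.exp (-t) * (Real.exp (-(b * t)) * μ + 1)⁻¹
      ≤ Real.exp (-t) * 1 := mul_le_mul_of_nonneg_left (by
        rw [inv_le_one_iff₀]; right; exact h1) (Real.exp_pos _).le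
    _ = Real.exp (-t) := mul_one _

lemma integral_pi_fin {N : ℕ} (φ : Fin N → ℝ → ℝ)
    (hint : ∀ i, IntegrableOn (φ i) (Set.Ioi (0:ℝ))) :
    (∫ t in Set.Ioi (0:ℝ), (fun i => φ i t)) = fun i => ∫ t in Set.Ioi (0:ℝ), φ i t := by
  have h1 : (fun t => (fun i => φ i t)) =
      fun t => ∑ i : Fin N, (φ i t) • Pi.single (M := fun _ : Fin N => ℝ) i 1 := by
    funext t
    rw [← Finset.univ_sum_single (fun i => φ i t)]
    congr 1; funext i
    rw [← Pi.single_smul, smul_eq_mul, mul_one]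
  rw [h1, integral_finset_sum]
  · have h2 : ∀ i : Fin N, (∫ t in Set.Ioi (0:ℝ),
        (φ i t) • Pi.single (M := fun _ : Fin N => ℝ) i 1) =
        Pi.single (M := fun _ : Fin N => ℝ) i (∫ t in Set.Ioi (0:ℝ), φ i t) := by
      intro i
      rw [integral_smul_const, ← Pi.single_smul, smul_eq_mul, mul_one]
    simp_rw [h2]
    rw [Finset.univ_sum_single (fun i => ∫ t in Set.Ioi (0:ℝ), φ i t)]
  · intro i _
    exact (hint i).smul_const _

lemma integral_pi_fin' {N : ℕ} (F : ℝ → Fin N → ℝ)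
    (hint : ∀ i, IntegrableOn (fun t => F t i) (Set.Ioi (0:ℝ))) :
    (∫ t in Set.Ioi (0:ℝ), F t) = fun i => ∫ t in Set.Ioi (0:ℝ), F t i :=
  integral_pi_fin (fun i t => F t i) hint

lemma gQuad_le_bound (Q : ℕ) (y τ : Fin Q → ℝ) (hτ : ∀ j, 0 ≤ τ j) {a b : ℝ} (ha : 0 ≤ a) :
    gQuad Q y τ a b ≤ 1 + ∑ j, τ j := by
  have h1 : ∀ t : ℝ, (1:ℝ) ≤ 1 + a * Real.exp (-b * t) :=
    fun t => le_add_of_nonneg_right (by positivity)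
  have hexp : IntegrableOn (fun t : ℝ => Real.exp (-t)) (Set.Ioi (0:ℝ)) := by
    simpa [neg_one_mul] using exp_neg_integrableOn_Ioi 0 one_pos
  rw [gQuad, sub_eq_add_neg]
  refine (abs_add_le _ _).trans ?_
  rw [abs_neg]
  refine add_le_add ?_ ?_
  · have hb : |∫ t in Set.Ioi (0:ℝ), Real.exp (-t) / (1 + a * Real.exp (-b * t))| ≤
        ∫ t in Set.Ioi (0:ℝ), Real.exp (-t) := by
      rw [← Real.norm_eq_abs]
      refine norm_integral_le_of_norm_le hexp ?_
      filter_upwards with t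
      rw [Real.norm_eq_abs, abs_div, abs_of_pos (Real.exp_pos _),
        abs_of_pos (lt_of_lt_of_le one_pos (h1 t))]
      exact div_le_self (Real.exp_pos _).le (h1 t)
    rw [integral_exp_neg_Ioi_zero] at hb
    simpa using hb
  · refine (Finset.abs_sum_le_sum_abs _ _).trans (Finset.sum_le_sum fun j _ => ?_)
    rw [abs_div, abs_of_nonneg (hτ j), abs_of_pos (lt_of_lt_of_le one_pos (h1 _))]
    exact div_le_self (hτ j) (h1 _)

lemma abs_Km_eq (Q : ℕ) (y τ : Fin Q → ℝ) {μ : ℝ} (b : ℝ) (hμ : 0 < μ) :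
    |(∑ j, τ j * (μ + Real.exp (-(b * y j)))⁻¹) -
        ∫ t in Set.Ioi (0:ℝ), Real.exp (-t) * (μ + Real.exp (-(b * t)))⁻¹| =
      μ⁻¹ * gQuad Q y τ μ⁻¹ b := by
  have key : ∀ t : ℝ, (μ + Real.exp (-(b * t)))⁻¹ = μ⁻¹ * (1 + μ⁻¹ * Real.exp (-b * t))⁻¹ := by
    intro t
    rw [neg_mul, ← mul_inv]
    congr 1
    field_simp
  have hsum : (∑ j, τ j * (μ + Real.exp (-(b * y j)))⁻¹) =
      μ⁻¹ * ∑ j, τ j / (1 + μ⁻¹ * Real.exp (-b * y j)) := by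
    rw [Finset.mul_sum]
    refine Finset.sum_congr rfl fun j _ => ?_
    rw [key, div_eq_mul_inv]; ring
  have hint : (∫ t in Set.Ioi (0:ℝ), Real.exp (-t) * (μ + Real.exp (-(b * t)))⁻¹) =
      μ⁻¹ * ∫ t in Set.Ioi (0:ℝ), Real.exp (-t) / (1 + μ⁻¹ * Real.exp (-b * t)) := by
    rw [← MeasureTheory.integral_const_mul]
    refine integral_congr_ae (Filter.Eventually.of_forall fun t => ?_)
    dsimp only
    rw [key, div_eq_mul_inv]; ring
  rw [hsum, hint, ← mul_sub, abs_mul, abs_of_pos (by positivity : (0:ℝ) < μ⁻¹), gQuad,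
    abs_sub_comm]

lemma abs_Kp_eq (Q : ℕ) (y τ : Fin Q → ℝ) (μ b : ℝ) :
    |(∑ j, τ j * (Real.exp (-(b * y j)) * μ + 1)⁻¹) -
        ∫ t in Set.Ioi (0:ℝ), Real.exp (-t) * (Real.exp (-(b * t)) * μ + 1)⁻¹| =
      gQuad Q y τ μ b := by
  have key : ∀ t : ℝ, (Real.exp (-(b * t)) * μ + 1)⁻¹ = (1 + μ * Real.exp (-b * t))⁻¹ := by
    intro t; rw [neg_mul]; ring_nf
  have hsum : (∑ j, τ j * (Real.exp (-(b * y j)) * μ + 1)⁻¹) =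
      ∑ j, τ j / (1 + μ * Real.exp (-b * y j)) := by
    refine Finset.sum_congr rfl fun j _ => ?_
    rw [key, div_eq_mul_inv]
  have hint : (∫ t in Set.Ioi (0:ℝ), Real.exp (-t) * (Real.exp (-(b * t)) * μ + 1)⁻¹) =
      ∫ t in Set.Ioi (0:ℝ), Real.exp (-t) / (1 + μ * Real.exp (-b * t)) := by
    refine integral_congr_ae (Filter.Eventually.of_forall fun t => ?_)
    dsimp only
    rw [key, div_eq_mul_inv]
  rw [hsum, hint, gQuad, abs_sub_comm]

open scoped MatrixOrder in
lemma exists_sqrt_psd {N : ℕ} {M : Matrix (Fin N) (Fin N) ℝ} (hM : M.PosSemidef) :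
    ∃ R : Matrix (Fin N) (Fin N) ℝ, R.IsHermitian ∧ R * R = M :=
  ⟨CFC.sqrt M, (CFC.sqrt_nonneg M).posSemidef.isHermitian, CFC.sqrt_mul_sqrt_self M hM.nonneg⟩

set_option maxHeartbeats 1000000 in
/-- Proposition 4.1 (matrix form): the quadrature-error certificate for the fully
discrete scheme. With
`G₋ = β₀(1-s) sup_{a ∈ [1/λ_max, 1/λ_min]} g_{M₋}(a, 1/(1-s))` and
`G₊ = β₀(s) sup_{a ∈ [λ_min, λ_max]} g_{M₊}(a, 1/s)`,
`‖u(s) − ũ(s)‖_M ≤ max(1, 1/λ_min(S,M)) ‖f‖_{M⁻¹} (G₋ + G₊)`. -/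
theorem quad_error_certificate {N : ℕ} (S M : Matrix (Fin N) (Fin N) ℝ)
    (hS : S.PosDef) (hM : M.PosDef) (f : Fin N → ℝ)
    (s : ℝ) (hs : s ∈ Set.Ioo (0:ℝ) 1)
    (Mm Mp : ℕ) (ym : Fin Mm → ℝ) (τm : Fin Mm → ℝ) (yp : Fin Mp → ℝ) (τp : Fin Mp → ℝ)
    (hym : ∀ j, 0 ≤ ym j) (hyp : ∀ j, 0 ≤ yp j)
    (hτm : ∀ j, 0 ≤ τm j) (hτp : ∀ j, 0 ≤ τp j) :
    normWeighted M
        ((beta0 (1 - s) • ∑ j, τm j • wMinus S M f (ym j / (1 - s)) +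
            beta0 s • ∑ j, τp j • wPlus S M f (yp j / s)) -
          (beta0 (1 - s) •
              (∫ t in Set.Ioi (0:ℝ), Real.exp (-t) • wMinus S M f (t / (1 - s))) +
            beta0 s •
              (∫ t in Set.Ioi (0:ℝ), Real.exp (-t) • wPlus S M f (t / s)))) ≤
      max 1 (1 / lamMinGen S M) * normWeighted M⁻¹ f *
        (beta0 (1 - s) *
            sSup ((fun a => gQuad Mm ym τm a (1 / (1 - s))) ''
              Set.Icc (1 / lamMaxGen S M) (1 / lamMinGen S M)) +
          beta0 s *
            sSup ((fun a => gQuad Mp yp τp a (1 / s)) ''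
              Set.Icc (lamMinGen S M) (lamMaxGen S M))) := by
  obtain ⟨hs0, hs1⟩ := hs
  rcases Nat.eq_zero_or_pos N with hN0 | hN
  · subst hN0
    simp only [normWeighted, dotProduct, Finset.univ_eq_empty, Finset.sum_empty, Real.sqrt_zero,
      mul_zero, zero_mul]
    exact le_refl 0
  haveI : Nonempty (Fin N) := Fin.pos_iff_nonempty.mp hN
  have i0 : Fin N := ⟨0, hN⟩
  -- square root of M
  have hMps : M.PosSemidef := hM.posSemidef
  obtain ⟨R, hRH0, hRR0⟩ := exists_sqrt_psd hMps
  have hRH : R.IsHermitian := hRH0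
  have hRT : Rᵀ = R := hRH
  have hRR : R * R = M := hRR0
  have hRdet : IsUnit R.det := by
    rw [isUnit_iff_ne_zero]
    intro h
    have h2 : R.det * R.det = M.det := by rw [← Matrix.det_mul, hRR]
    rw [h, mul_zero] at h2
    exact hM.det_pos.ne' h2.symm
  have hRinv : R * R⁻¹ = 1 := Matrix.mul_nonsing_inv R hRdet
  have hRinv' : R⁻¹ * R = 1 := Matrix.nonsing_inv_mul R hRdet
  have hRiT : (R⁻¹)ᵀ = R⁻¹ := by rw [Matrix.transpose_nonsing_inv, hRT]
  -- the symmetrized matrix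
  set A : Matrix (Fin N) (Fin N) ℝ := R⁻¹ * S * R⁻¹ with hAdef
  have hRiH : (R⁻¹)ᴴ = R⁻¹ := hRiT
  have hAH : A.IsHermitian := by
    show Aᴴ = A
    rw [hAdef]
    calc (R⁻¹ * S * R⁻¹)ᴴ = (R⁻¹)ᴴ * ((R⁻¹ * S)ᴴ) := Matrix.conjTranspose_mul _ _
      _ = (R⁻¹)ᴴ * (Sᴴ * (R⁻¹)ᴴ) := by rw [Matrix.conjTranspose_mul]
      _ = R⁻¹ * (S * R⁻¹) := by rw [hRiH, hS.isHermitian.eq]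
      _ = R⁻¹ * S * R⁻¹ := (Matrix.mul_assoc _ _ _).symm
  have hAPD : A.PosDef := by
    refine Matrix.PosDef.of_dotProduct_mulVec_pos hAH fun x hx => ?_
    have hx' : R⁻¹ *ᵥ x ≠ 0 := by
      intro h
      apply hx
      have h2 : R *ᵥ (R⁻¹ *ᵥ x) = 0 := by rw [h, Matrix.mulVec_zero]
      rwa [Matrix.mulVec_mulVec, hRinv, Matrix.one_mulVec] at h2
    have h2 := hS.dotProduct_mulVec_pos hx'
    simp only [star_trivial] at h2 ⊢
    rw [hAdef]
    rw [← Matrix.mulVec_mulVec, ← Matrix.mulVec_mulVec, dot_sym_move hRiT]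
    exact h2
  -- spectral data
  obtain ⟨U, lam, hUU, hUU', hspec, hlam, heig⟩ :
      ∃ (U : Matrix (Fin N) (Fin N) ℝ) (lam : Fin N → ℝ),
        star U * U = 1 ∧ U * star U = 1 ∧ A = U * Matrix.diagonal lam * star U ∧
        (∀ i, 0 < lam i) ∧ (∀ i, ∃ u : Fin N → ℝ, u ≠ 0 ∧ A *ᵥ u = lam i • u) := by
    refine ⟨hAH.eigenvectorUnitary, hAH.eigenvalues,
      Unitary.coe_star_mul_self _, Unitary.coe_mul_star_self _,
      by simpa using hAH.spectral_theorem, fun i => hAPD.eigenvalues_pos i,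
      fun i => ⟨⇑(hAH.eigenvectorBasis i), ?_, hAH.mulVec_eigenvectorBasis i⟩⟩
    intro h
    apply hAH.eigenvectorBasis.orthonormal.ne_zero i
    ext k
    exact congrFun h k
  have hUUT : Uᵀ * U = 1 := hUU
  have hUT : Uᵀ = star U := rfl
  have hstarUT : (star U)ᵀ = U := by rw [← hUT, Matrix.transpose_transpose]
  have hstarUU : (star U)ᵀ * star U = 1 := by rw [hstarUT]; exact hUU'
  set ghat : Fin N → ℝ := star U *ᵥ (R⁻¹ *ᵥ f) with hghatdef
  -- conjugation formulas
  have hXX : ∀ d : Fin N → ℝ, (∀ i, d i ≠ 0) →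
      (U * Matrix.diagonal d * star U) * (U * Matrix.diagonal (fun i => (d i)⁻¹) * star U)
        = 1 := by
    intro d hd
    calc (U * Matrix.diagonal d * star U) * (U * Matrix.diagonal (fun i => (d i)⁻¹) * star U)
        = U * (Matrix.diagonal d *
            ((star U * U) * (Matrix.diagonal (fun i => (d i)⁻¹) * star U))) := by
          simp only [Matrix.mul_assoc]
      _ = U * (Matrix.diagonal d * (Matrix.diagonal (fun i => (d i)⁻¹) * star U)) := by
          rw [hUU, Matrix.one_mul]
      _ = U * ((Matrix.diagonal d * Matrix.diagonal (fun i => (d i)⁻¹)) * star U) := by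
          rw [Matrix.mul_assoc]
      _ = 1 := by
          rw [Matrix.diagonal_mul_diagonal]
          have hd2 : Matrix.diagonal (fun i => d i * (d i)⁻¹) = (1 : Matrix (Fin N) (Fin N) ℝ) := by
            have hd1 : (fun i => d i * (d i)⁻¹) = (1 : Fin N → ℝ) := by
              funext i
              simp [mul_inv_cancel₀ (hd i)]
            rw [hd1]
            exact Matrix.diagonal_one
          rw [hd2, Matrix.one_mul, hUU']
  have hsand : ∀ X X' : Matrix (Fin N) (Fin N) ℝ, X * X' = 1 →
      (R * X * R) * (R⁻¹ * X' * R⁻¹) = 1 := by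
    intro X X' hXX'
    calc (R * X * R) * (R⁻¹ * X' * R⁻¹)
        = R * (X * ((R * R⁻¹) * (X' * R⁻¹))) := by simp only [Matrix.mul_assoc]
      _ = R * (X * (X' * R⁻¹)) := by rw [hRinv, Matrix.one_mul]
      _ = R * ((X * X') * R⁻¹) := by rw [Matrix.mul_assoc]
      _ = 1 := by rw [hXX', Matrix.one_mul, hRinv]
  have hRAR : R * A * R = S := by
    rw [hAdef]
    calc R * (R⁻¹ * S * R⁻¹) * R = (R * R⁻¹) * (S * (R⁻¹ * R)) := by
          simp only [Matrix.mul_assoc]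
      _ = S := by rw [hRinv, hRinv', Matrix.one_mul, Matrix.mul_one]
  have hform_m : ∀ c : ℝ,
      S + c • M = R * (U * Matrix.diagonal (fun i => lam i + c) * star U) * R := by
    intro c
    have h1 : Matrix.diagonal (fun i => lam i + c)
        = Matrix.diagonal lam + c • (1 : Matrix (Fin N) (Fin N) ℝ) := by
      have h1' : Matrix.diagonal lam + c • (1 : Matrix (Fin N) (Fin N) ℝ)
          = Matrix.diagonal (fun i => lam i + c) := by
        rw [← Matrix.diagonal_one, ← Matrix.diagonal_smul, Matrix.diagonal_add]
        congr 1
        funext i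
        simp
      exact h1'.symm
    have h2 : U * Matrix.diagonal (fun i => lam i + c) * star U
        = A + c • (1 : Matrix (Fin N) (Fin N) ℝ) := by
      rw [h1, Matrix.mul_add, Matrix.add_mul, ← hspec]
      have hc1 : U * (c • (1 : Matrix (Fin N) (Fin N) ℝ)) * star U
          = c • (1 : Matrix (Fin N) (Fin N) ℝ) := by
        rw [Matrix.mul_smul, Matrix.smul_mul, Matrix.mul_one, hUU']
      rw [hc1]
    have h3 : R * (A + c • (1 : Matrix (Fin N) (Fin N) ℝ)) * R = S + c • M := by
      have hc2 : R * (c • (1 : Matrix (Fin N) (Fin N) ℝ)) * R = c • M := by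
        rw [Matrix.mul_smul, Matrix.mul_one, Matrix.smul_mul, hRR]
      rw [Matrix.mul_add, Matrix.add_mul, hRAR, hc2]
    rw [h2, h3]
  have hform_p : ∀ c : ℝ,
      c • S + M = R * (U * Matrix.diagonal (fun i => c * lam i + 1) * star U) * R := by
    intro c
    have h1 : Matrix.diagonal (fun i => c * lam i + 1)
        = c • Matrix.diagonal lam + (1 : Matrix (Fin N) (Fin N) ℝ) := by
      have h1' : c • Matrix.diagonal lam + (1 : Matrix (Fin N) (Fin N) ℝ)
          = Matrix.diagonal (fun i => c * lam i + 1) := by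
        rw [← Matrix.diagonal_smul, ← Matrix.diagonal_one, Matrix.diagonal_add]
        refine congrArg Matrix.diagonal ?_
        funext i
        simp
      exact h1'.symm
    have h2 : U * Matrix.diagonal (fun i => c * lam i + 1) * star U
        = c • A + (1 : Matrix (Fin N) (Fin N) ℝ) := by
      have hc1 : U * (c • Matrix.diagonal lam) * star U = c • A := by
        rw [Matrix.mul_smul, Matrix.smul_mul, ← hspec]
      have hc2 : U * (1 : Matrix (Fin N) (Fin N) ℝ) * star U = 1 := by
        rw [Matrix.mul_one, hUU']
      rw [h1, Matrix.mul_add, Matrix.add_mul, hc1, hc2]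
    have h3 : R * (c • A + (1 : Matrix (Fin N) (Fin N) ℝ)) * R = c • S + M := by
      have hc1 : R * (c • A) * R = c • S := by
        rw [Matrix.mul_smul, Matrix.smul_mul, hRAR]
      have hc2 : R * (1 : Matrix (Fin N) (Fin N) ℝ) * R = M := by
        rw [Matrix.mul_one, hRR]
      rw [Matrix.mul_add, Matrix.add_mul, hc1, hc2]
    rw [h2, h3]
  have hres_m : ∀ c : ℝ, 0 < c →
      (S + c • M)⁻¹ *ᵥ f = (R⁻¹ * U) *ᵥ (fun i => (lam i + c)⁻¹ * ghat i) := by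
    intro c hc
    have hinv : (S + c • M)⁻¹
        = R⁻¹ * (U * Matrix.diagonal (fun i => (lam i + c)⁻¹) * star U) * R⁻¹ := by
      apply Matrix.inv_eq_right_inv
      rw [hform_m c]
      exact hsand _ _ (hXX _ (fun i => (add_pos (hlam i) hc).ne'))
    rw [hinv]
    have harg : (fun i => (lam i + c)⁻¹ * ghat i)
        = (Matrix.diagonal fun i => (lam i + c)⁻¹) *ᵥ ((star U * R⁻¹) *ᵥ f) := by
      funext i
      rw [Matrix.mulVec_diagonal, hghatdef, Matrix.mulVec_mulVec]
    rw [harg, Matrix.mulVec_mulVec, Matrix.mulVec_mulVec]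
    refine congrArg (fun B => B *ᵥ f) ?_
    simp only [Matrix.mul_assoc]
  have hres_p : ∀ c : ℝ, 0 < c →
      (c • S + M)⁻¹ *ᵥ f = (R⁻¹ * U) *ᵥ (fun i => (c * lam i + 1)⁻¹ * ghat i) := by
    intro c hc
    have hinv : (c • S + M)⁻¹
        = R⁻¹ * (U * Matrix.diagonal (fun i => (c * lam i + 1)⁻¹) * star U) * R⁻¹ := by
      apply Matrix.inv_eq_right_inv
      rw [hform_p c]
      refine hsand _ _ (hXX _ (fun i => ?_))
      have := hlam i
      positivity
    rw [hinv]
    have harg : (fun i => (c * lam i + 1)⁻¹ * ghat i)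
        = (Matrix.diagonal fun i => (c * lam i + 1)⁻¹) *ᵥ ((star U * R⁻¹) *ᵥ f) := by
      funext i
      rw [Matrix.mulVec_diagonal, hghatdef, Matrix.mulVec_mulVec]
    rw [harg, Matrix.mulVec_mulVec, Matrix.mulVec_mulVec]
    refine congrArg (fun B => B *ᵥ f) ?_
    simp only [Matrix.mul_assoc]
  -- the continuous linear equivalence given by R⁻¹ * U
  have hUdet : IsUnit U.det := by
    have hdet1 : U.det * (star U).det = 1 := by rw [← Matrix.det_mul, hUU', Matrix.det_one]
    exact IsUnit.of_mul_eq_one _ hdet1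
  have hRidet : IsUnit (R⁻¹).det := Matrix.isUnit_nonsing_inv_det R hRdet
  have hBdet : IsUnit ((R⁻¹ * U).det) := by rw [Matrix.det_mul]; exact hRidet.mul hUdet
  have hBinv : Invertible (R⁻¹ * U) := (R⁻¹ * U).invertibleOfIsUnitDet hBdet
  let L : (Fin N → ℝ) ≃L[ℝ] (Fin N → ℝ) :=
    ((R⁻¹ * U).toLinearEquiv' hBinv).toContinuousLinearEquiv
  have hL : ∀ x : Fin N → ℝ, L x = (R⁻¹ * U) *ᵥ x := fun x => rfl
  set bm : ℝ := 1 / (1 - s) with hbmdef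
  set bp : ℝ := 1 / s with hbpdef
  have hdm : ∀ y : ℝ, y / (1 - s) = bm * y := by
    intro y; rw [hbmdef, one_div_mul_eq_div]
  have hdp : ∀ y : ℝ, y / s = bp * y := by
    intro y; rw [hbpdef, one_div_mul_eq_div]
  have hwMinus : ∀ y : ℝ, wMinus S M f y = L (fun i => (lam i + Real.exp (-y))⁻¹ * ghat i) := by
    intro y
    have h0 : wMinus S M f y = (S + Real.exp (-y) • M)⁻¹ *ᵥ f := rfl
    rw [h0, hL]
    exact hres_m _ (Real.exp_pos _)
  have hwPlus : ∀ y : ℝ,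
      wPlus S M f y = L (fun i => (Real.exp (-y) * lam i + 1)⁻¹ * ghat i) := by
    intro y
    have h0 : wPlus S M f y = (Real.exp (-y) • S + M)⁻¹ *ᵥ f := rfl
    rw [h0, hL]
    exact hres_p _ (Real.exp_pos _)
  -- quadrature sums
  have hSm : (∑ j, τm j • wMinus S M f (ym j / (1 - s))) =
      L (fun i => (∑ j, τm j * (lam i + Real.exp (-(bm * ym j)))⁻¹) * ghat i) := by
    calc (∑ j, τm j • wMinus S M f (ym j / (1 - s)))
        = ∑ j, L (τm j • fun i => (lam i + Real.exp (-(bm * ym j)))⁻¹ * ghat i) := by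
          refine Finset.sum_congr rfl fun j _ => ?_
          rw [hdm, hwMinus, _root_.map_smul]
      _ = L (∑ j, τm j • fun i => (lam i + Real.exp (-(bm * ym j)))⁻¹ * ghat i) :=
          (_root_.map_sum L _ Finset.univ).symm
      _ = L (fun i => (∑ j, τm j * (lam i + Real.exp (-(bm * ym j)))⁻¹) * ghat i) := by
          refine congrArg (fun v => L v) ?_
          funext i
          simp only [Finset.sum_apply, Pi.smul_apply, smul_eq_mul, Finset.sum_mul, mul_assoc]
  have hSp : (∑ j, τp j • wPlus S M f (yp j / s)) =
      L (fun i => (∑ j, τp j * (Real.exp (-(bp * yp j)) * lam i + 1)⁻¹) * ghat i) := by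
    calc (∑ j, τp j • wPlus S M f (yp j / s))
        = ∑ j, L (τp j • fun i => (Real.exp (-(bp * yp j)) * lam i + 1)⁻¹ * ghat i) := by
          refine Finset.sum_congr rfl fun j _ => ?_
          rw [hdp, hwPlus, _root_.map_smul]
      _ = L (∑ j, τp j • fun i => (Real.exp (-(bp * yp j)) * lam i + 1)⁻¹ * ghat i) :=
          (_root_.map_sum L _ Finset.univ).symm
      _ = L (fun i => (∑ j, τp j * (Real.exp (-(bp * yp j)) * lam i + 1)⁻¹) * ghat i) := by
          refine congrArg (fun v => L v) ?_
          funext i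
          simp only [Finset.sum_apply, Pi.smul_apply, smul_eq_mul, Finset.sum_mul, mul_assoc]
  -- integrals
  have hIm : (∫ t in Set.Ioi (0:ℝ), Real.exp (-t) • wMinus S M f (t / (1 - s))) =
      L (fun i => (∫ t in Set.Ioi (0:ℝ),
          Real.exp (-t) * (lam i + Real.exp (-(bm * t)))⁻¹) * ghat i) := by
    have h1 : ∀ t : ℝ, Real.exp (-t) • wMinus S M f (t / (1 - s)) =
        L (fun i => (Real.exp (-t) * (lam i + Real.exp (-(bm * t)))⁻¹) * ghat i) := by
      intro t
      rw [hdm, hwMinus, ← _root_.map_smul]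
      refine congrArg (fun v => L v) ?_
      funext i
      simp only [Pi.smul_apply, smul_eq_mul]
      ring
    rw [integral_congr_ae (Filter.Eventually.of_forall h1), L.integral_comp_comm,
      integral_pi_fin' _ (fun i => (integrableOn_res_minus (lam i) bm (hlam i)).mul_const _)]
    refine congrArg (fun v => L v) ?_
    funext i
    exact MeasureTheory.integral_mul_const _ _
  have hIp : (∫ t in Set.Ioi (0:ℝ), Real.exp (-t) • wPlus S M f (t / s)) =
      L (fun i => (∫ t in Set.Ioi (0:ℝ),
          Real.exp (-t) * (Real.exp (-(bp * t)) * lam i + 1)⁻¹) * ghat i) := by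
    have h1 : ∀ t : ℝ, Real.exp (-t) • wPlus S M f (t / s) =
        L (fun i => (Real.exp (-t) * (Real.exp (-(bp * t)) * lam i + 1)⁻¹) * ghat i) := by
      intro t
      rw [hdp, hwPlus, ← _root_.map_smul]
      refine congrArg (fun v => L v) ?_
      funext i
      simp only [Pi.smul_apply, smul_eq_mul]
      ring
    rw [integral_congr_ae (Filter.Eventually.of_forall h1), L.integral_comp_comm,
      integral_pi_fin' _ (fun i => (integrableOn_res_plus (lam i) bp (hlam i).le).mul_const _)]
    refine congrArg (fun v => L v) ?_
    funext i
    exact MeasureTheory.integral_mul_const _ _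
  -- the error coefficients
  set Km : Fin N → ℝ := fun i => (∑ j, τm j * (lam i + Real.exp (-(bm * ym j)))⁻¹) -
      ∫ t in Set.Ioi (0:ℝ), Real.exp (-t) * (lam i + Real.exp (-(bm * t)))⁻¹ with hKmdef
  set Kp : Fin N → ℝ := fun i => (∑ j, τp j * (Real.exp (-(bp * yp j)) * lam i + 1)⁻¹) -
      ∫ t in Set.Ioi (0:ℝ), Real.exp (-t) * (Real.exp (-(bp * t)) * lam i + 1)⁻¹ with hKpdef
  have hBig : (beta0 (1 - s) • ∑ j, τm j • wMinus S M f (ym j / (1 - s)) +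
        beta0 s • ∑ j, τp j • wPlus S M f (yp j / s)) -
      (beta0 (1 - s) • (∫ t in Set.Ioi (0:ℝ), Real.exp (-t) • wMinus S M f (t / (1 - s))) +
        beta0 s • (∫ t in Set.Ioi (0:ℝ), Real.exp (-t) • wPlus S M f (t / s))) =
      L (beta0 (1 - s) • (fun i => Km i * ghat i) + beta0 s • (fun i => Kp i * ghat i)) := by
    rw [hSm, hSp, hIm, hIp, ← _root_.map_smul, ← _root_.map_smul, ← _root_.map_smul, ← _root_.map_smul, ← _root_.map_add,
      ← _root_.map_add, ← _root_.map_sub]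
    refine congrArg (fun v => L v) ?_
    funext i
    simp only [Pi.add_apply, Pi.sub_apply, Pi.smul_apply, smul_eq_mul, hKmdef, hKpdef]
    ring
  -- norm identities
  have hNW : ∀ v : Fin N → ℝ, normWeighted M v = enorm2 (R *ᵥ v) := by
    intro v
    rw [normWeighted, enorm2_eq_sqrt]
    refine congrArg Real.sqrt ?_
    rw [← hRR, ← Matrix.mulVec_mulVec, dot_sym_move hRT]
  have hRL : ∀ x : Fin N → ℝ, R *ᵥ (L x) = U *ᵥ x := by
    intro x
    rw [hL, Matrix.mulVec_mulVec, ← Matrix.mul_assoc, hRinv, Matrix.one_mul]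
  have hUnorm : ∀ x : Fin N → ℝ, enorm2 (U *ᵥ x) = enorm2 x := by
    intro x
    rw [enorm2_eq_sqrt, enorm2_eq_sqrt, dot_mulVec_self hUUT]
  -- quadratic form identities
  have hSA : ∀ z : Fin N → ℝ, (R⁻¹ *ᵥ z) ⬝ᵥ S.mulVec (R⁻¹ *ᵥ z) = z ⬝ᵥ A *ᵥ z := by
    intro z
    rw [hAdef, ← Matrix.mulVec_mulVec, ← Matrix.mulVec_mulVec, dot_sym_move hRiT]
  have hMA : ∀ z : Fin N → ℝ, (R⁻¹ *ᵥ z) ⬝ᵥ M.mulVec (R⁻¹ *ᵥ z) = z ⬝ᵥ z := by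
    intro z
    have h1 : R *ᵥ (R⁻¹ *ᵥ z) = z := by rw [Matrix.mulVec_mulVec, hRinv, Matrix.one_mulVec]
    have h2 : (R * R) *ᵥ (R⁻¹ *ᵥ z) = R *ᵥ z := by rw [← Matrix.mulVec_mulVec, h1]
    rw [← hRR, h2, dot_sym_move hRT, h1]
  have hAz : ∀ z : Fin N → ℝ, z ⬝ᵥ A *ᵥ z = ∑ i, lam i * ((star U *ᵥ z) i)^2 := by
    intro z
    rw [hspec, Matrix.mul_assoc, ← Matrix.mulVec_mulVec, Matrix.dotProduct_mulVec,
      vecMul_eq_transpose_mulVec, hUT, ← Matrix.mulVec_mulVec, dotProduct]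
    refine Finset.sum_congr rfl fun i _ => ?_
    rw [Matrix.mulVec_diagonal]
    ring
  have hzz : ∀ z : Fin N → ℝ, z ⬝ᵥ z = ∑ i, ((star U *ᵥ z) i)^2 := by
    intro z
    rw [← dot_mulVec_self hstarUU z, dotProduct]
    refine Finset.sum_congr rfl fun i _ => ?_
    ring
  -- Rayleigh quotient bounds
  set T : Set ℝ :=
    ((fun x : Fin N → ℝ => (x ⬝ᵥ S.mulVec x) / (x ⬝ᵥ M.mulVec x)) '' {x | x ≠ 0}) with hTdef
  have hlamMin : lamMinGen S M = sInf T := rfl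
  have hlamMax : lamMaxGen S M = sSup T := rfl
  have hxz : ∀ x : Fin N → ℝ, x = R⁻¹ *ᵥ (R *ᵥ x) := by
    intro x
    rw [Matrix.mulVec_mulVec, hRinv', Matrix.one_mulVec]
  have hmemT : ∀ i, lam i ∈ T := by
    intro i
    obtain ⟨u, hu0, huA⟩ := heig i
    have huu : u ⬝ᵥ u ≠ 0 := fun h => hu0 (dotProduct_self_eq_zero.mp h)
    refine ⟨R⁻¹ *ᵥ u, ?_, ?_⟩
    · intro h
      apply hu0
      have h2 : R *ᵥ (R⁻¹ *ᵥ u) = 0 := by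
        rw [h, Matrix.mulVec_zero]
      rwa [Matrix.mulVec_mulVec, hRinv, Matrix.one_mulVec] at h2
    · show (_ ⬝ᵥ _) / (_ ⬝ᵥ _) = lam i
      rw [hSA, hMA, huA, dotProduct_smul, smul_eq_mul,
        mul_div_assoc, div_self huu, mul_one]
  have hwz : ∀ x : Fin N → ℝ, x ≠ 0 → (0:ℝ) < ∑ i, ((star U *ᵥ (R *ᵥ x)) i)^2 := by
    intro x hx
    rw [← hzz]
    have hz0 : R *ᵥ x ≠ 0 := by
      intro h
      apply hx
      rw [hxz x, h, Matrix.mulVec_zero]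
    have h1 : (R *ᵥ x) ⬝ᵥ (R *ᵥ x) ≠ 0 := fun h => hz0 (dotProduct_self_eq_zero.mp h)
    have h2 : 0 ≤ (R *ᵥ x) ⬝ᵥ (R *ᵥ x) := by
      rw [dotProduct]
      exact Finset.sum_nonneg fun i _ => mul_self_nonneg _
    exact lt_of_le_of_ne h2 (Ne.symm h1)
  have hTub : ∀ r ∈ T, r ≤ Finset.univ.sup' Finset.univ_nonempty lam := by
    rintro r ⟨x, hx, rfl⟩
    simp only [Set.mem_setOf_eq] at hx
    dsimp only
    have hden := hwz x hx
    rw [hxz x, hSA, hMA, hAz, hzz, div_le_iff₀ hden, Finset.mul_sum]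
    refine Finset.sum_le_sum fun i _ => ?_
    exact mul_le_mul_of_nonneg_right (Finset.le_sup' lam (Finset.mem_univ i)) (sq_nonneg _)
  have hTlb : ∀ r ∈ T, Finset.univ.inf' Finset.univ_nonempty lam ≤ r := by
    rintro r ⟨x, hx, rfl⟩
    simp only [Set.mem_setOf_eq] at hx
    dsimp only
    have hden := hwz x hx
    rw [hxz x, hSA, hMA, hAz, hzz, le_div_iff₀ hden, Finset.mul_sum]
    refine Finset.sum_le_sum fun i _ => ?_
    exact mul_le_mul_of_nonneg_right (Finset.inf'_le lam (Finset.mem_univ i)) (sq_nonneg _)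
  have hTne : T.Nonempty := ⟨lam i0, hmemT i0⟩
  have hbddA : BddAbove T := ⟨_, fun r hr => hTub r hr⟩
  have hbddB : BddBelow T := ⟨_, fun r hr => hTlb r hr⟩
  have hminle : ∀ i, lamMinGen S M ≤ lam i := fun i => csInf_le hbddB (hmemT i)
  have hlemax : ∀ i, lam i ≤ lamMaxGen S M := fun i => le_csSup hbddA (hmemT i)
  have hinfpos : 0 < Finset.univ.inf' Finset.univ_nonempty lam := by
    rw [Finset.lt_inf'_iff]
    exact fun i _ => hlam i
  have hminpos : 0 < lamMinGen S M := lt_of_lt_of_le hinfpos (le_csInf hTne hTlb)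
  have hmaxpos : 0 < lamMaxGen S M := lt_of_lt_of_le (hlam i0) (hlemax i0)
  have hmemIm : ∀ i, (lam i)⁻¹ ∈ Set.Icc (1 / lamMaxGen S M) (1 / lamMinGen S M) := by
    intro i
    constructor
    · rw [one_div]
      exact inv_anti₀ (hlam i) (hlemax i)
    · rw [one_div]
      exact inv_anti₀ hminpos (hminle i)
  have hmemIp : ∀ i, lam i ∈ Set.Icc (lamMinGen S M) (lamMaxGen S M) :=
    fun i => ⟨hminle i, hlemax i⟩
  set Gm : ℝ := sSup ((fun a => gQuad Mm ym τm a bm) ''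
      Set.Icc (1 / lamMaxGen S M) (1 / lamMinGen S M)) with hGmdef
  set Gp : ℝ := sSup ((fun a => gQuad Mp yp τp a bp) ''
      Set.Icc (lamMinGen S M) (lamMaxGen S M)) with hGpdef
  have hbddGm : BddAbove ((fun a => gQuad Mm ym τm a bm) ''
      Set.Icc (1 / lamMaxGen S M) (1 / lamMinGen S M)) := by
    refine ⟨1 + ∑ j, τm j, ?_⟩
    rintro v ⟨a, ha, rfl⟩
    refine gQuad_le_bound Mm ym τm hτm (le_trans ?_ ha.1)
    positivity
  have hbddGp : BddAbove ((fun a => gQuad Mp yp τp a bp) ''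
      Set.Icc (lamMinGen S M) (lamMaxGen S M)) := by
    refine ⟨1 + ∑ j, τp j, ?_⟩
    rintro v ⟨a, ha, rfl⟩
    exact gQuad_le_bound Mp yp τp hτp (le_trans hminpos.le ha.1)
  have hGmge : ∀ i, gQuad Mm ym τm (lam i)⁻¹ bm ≤ Gm :=
    fun i => le_csSup hbddGm ⟨(lam i)⁻¹, hmemIm i, rfl⟩
  have hGpge : ∀ i, gQuad Mp yp τp (lam i) bp ≤ Gp :=
    fun i => le_csSup hbddGp ⟨lam i, hmemIp i, rfl⟩
  have hGm0 : 0 ≤ Gm := le_trans (abs_nonneg _) (hGmge i0)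
  have hGp0 : 0 ≤ Gp := le_trans (abs_nonneg _) (hGpge i0)
  set cm : ℝ := max 1 (1 / lamMinGen S M) with hcmdef
  have hc1 : (1:ℝ) ≤ cm := le_max_left _ _
  have hc0 : (0:ℝ) ≤ cm := le_trans zero_le_one hc1
  have hKmb : ∀ i, |Km i| ≤ cm * Gm := by
    intro i
    have he : |Km i| = (lam i)⁻¹ * gQuad Mm ym τm (lam i)⁻¹ bm := by
      rw [hKmdef]
      exact abs_Km_eq Mm ym τm bm (hlam i)
    rw [he]
    exact mul_le_mul (le_trans (hmemIm i).2 (le_max_right _ _)) (hGmge i) (abs_nonneg _) hc0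
  have hKpb : ∀ i, |Kp i| ≤ cm * Gp := by
    intro i
    have he : |Kp i| = gQuad Mp yp τp (lam i) bp := by
      rw [hKpdef]
      exact abs_Kp_eq Mp yp τp (lam i) bp
    rw [he]
    calc gQuad Mp yp τp (lam i) bp ≤ Gp := hGpge i
      _ ≤ cm * Gp := le_mul_of_one_le_left hGp0 hc1
  have hbeta : ∀ t : ℝ, 0 < t → t < 1 → 0 ≤ beta0 t := by
    intro t h0 h1
    have hpi := Real.pi_pos
    refine div_nonneg ?_ (by positivity)
    refine Real.sin_nonneg_of_nonneg_of_le_pi (by positivity) ?_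
    nlinarith
  have hbm0 : 0 ≤ beta0 (1 - s) := hbeta _ (by linarith) (by linarith)
  have hbp0 : 0 ≤ beta0 s := hbeta _ hs0 hs1
  have hE : normWeighted M⁻¹ f = enorm2 ghat := by
    rw [normWeighted, enorm2_eq_sqrt]
    refine congrArg Real.sqrt ?_
    have hMinv : M⁻¹ = R⁻¹ * R⁻¹ := by rw [← hRR, Matrix.mul_inv_rev]
    rw [hMinv, ← Matrix.mulVec_mulVec, dot_sym_move hRiT, hghatdef,
      ← dot_mulVec_self hstarUU (R⁻¹ *ᵥ f)]
  rw [hBig, hNW, hRL, hUnorm, hE]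
  calc enorm2 (beta0 (1 - s) • (fun i => Km i * ghat i) + beta0 s • (fun i => Kp i * ghat i))
      ≤ enorm2 (beta0 (1 - s) • (fun i => Km i * ghat i)) +
          enorm2 (beta0 s • (fun i => Kp i * ghat i)) := enorm2_add_le _ _
    _ = beta0 (1 - s) * enorm2 (fun i => Km i * ghat i) +
          beta0 s * enorm2 (fun i => Kp i * ghat i) := by
        rw [enorm2_smul, enorm2_smul, abs_of_nonneg hbm0, abs_of_nonneg hbp0]
    _ ≤ beta0 (1 - s) * ((cm * Gm) * enorm2 ghat) + beta0 s * ((cm * Gp) * enorm2 ghat) := by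
        refine add_le_add (mul_le_mul_of_nonneg_left ?_ hbm0) (mul_le_mul_of_nonneg_left ?_ hbp0)
        · refine enorm2_le_of_abs_le (mul_nonneg hc0 hGm0) fun i => ?_
          rw [abs_mul]
          exact mul_le_mul_of_nonneg_right (hKmb i) (abs_nonneg _)
        · refine enorm2_le_of_abs_le (mul_nonneg hc0 hGp0) fun i => ?_
          rw [abs_mul]
          exact mul_le_mul_of_nonneg_right (hKpb i) (abs_nonneg _)
    _ = cm * enorm2 ghat * (beta0 (1 - s) * Gm + beta0 s * Gp) := by ring
end

section
/- Let S and M be symmetric positive definite real N×N matrices, f ∈ ℝ^N, and for y ≥ 0 set w₋(y) := (S + e^{-y} M)^{-1} f and w₊(y) := (e^{-y} S + M)^{-1} f. Let (y_{j,σ}, τ_{j,σ})_{j=1}^{M_σ}, σ ∈ {+,-}, be quadrature rules with nonnegative nodes, nonnegative weights, and Σ_j τ_{j,σ} ≤ 1 for each σ. For s ∈ (0,1) put s₋ := 1-s, s₊ := s, β₀(t) := sin(πt)/(πt), and define ũ(s) := Σ_σ β₀(s_σ) ∫₀^∞ w_σ(y/s_σ) e^{-y} dy and u(s) := Σ_σ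 β₀(s_σ) Σ_{j=1}^{M_σ} τ_{j,σ} w_σ(y_{j,σ}/s_σ). Then for every s ∈ (0,1): ‖u(s) − ũ(s)‖_M ≤ (8/π) · max(1, 1/λ_min(S,M)) · ‖f‖_{M^{-1}}. -/
open Matrix MeasureTheory Real Set

lemma coskey {y : ℝ} (h0 : 0 ≤ y) (h2 : y ≤ π / 2) :
    Real.cos y ≤ 1 - 4 / π ^ 2 * y ^ 2 := by
  have hπ := Real.pi_gt_d6
  have hπ' := Real.pi_lt_d6
  rcases le_or_gt y 1 with hy | hy
  · have hb := Real.cos_bound (x := y) (by rw [abs_of_nonneg h0]; exact hy)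
    rw [abs_of_nonneg h0] at hb
    have hy2 : y ^ 2 ≤ 1 := by nlinarith
    have h4 : y ^ 4 ≤ y ^ 2 := by nlinarith [sq_nonneg y, mul_le_mul_of_nonneg_left hy2 (sq_nonneg y)]
    have hcos : Real.cos y ≤ 1 - y ^ 2 / 2 + y ^ 2 * (5 / 96) := by
      linarith [(abs_le.1 hb).2]
    have hππ : (4:ℝ) / π ^ 2 ≤ 4 / 9 := by
      rw [div_le_div_iff₀ (by positivity) (by norm_num)]
      nlinarith
    have := mul_le_mul_of_nonneg_right hππ (sq_nonneg y)
    linarith [sq_nonneg y]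
  · have hsin : Real.cos y = Real.sin (π / 2 - y) := (Real.sin_pi_div_two_sub y).symm
    have hle : Real.sin (π / 2 - y) ≤ π / 2 - y := Real.sin_le (by linarith)
    have key : (π / 2 - y) * π ^ 2 ≤ π ^ 2 - 4 * y ^ 2 := by
      have hq : (0:ℝ) ≤ 2 * π + 4 - π ^ 2 := by nlinarith
      nlinarith [mul_nonneg (sub_nonneg.2 hy.le) (sub_nonneg.2 h2),
        mul_nonneg (sub_nonneg.2 h2) hq]
    have key2 : π / 2 - y ≤ 1 - 4 / π ^ 2 * y ^ 2 := by
      rw [show 1 - 4 / π ^ 2 * y ^ 2 = (π ^ 2 - 4 * y ^ 2) / π ^ 2 by field_simp]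
      rw [le_div_iff₀ (by positivity)]
      exact key
    linarith [hsin ▸ hle]

lemma sin_le_parab {s : ℝ} (h0 : 0 < s) (h1 : s < 1) :
    Real.sin (π * s) ≤ 4 * s * (1 - s) := by
  have hπ : 0 < π := Real.pi_pos
  have h := Real.cos_sub_pi_div_two (π * s)
  set y := π * s - π / 2 with hy
  have hsin : Real.sin (π * s) = Real.cos y := h.symm
  have hcos : Real.cos y ≤ 1 - 4 / π ^ 2 * y ^ 2 := by
    rcases le_or_gt 0 y with hy0 | hy0
    · exact coskey hy0 (by rw [hy]; nlinarith)
    · have := coskey (y := -y) (by linarith) (by rw [hy]; nlinarith)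
      rw [Real.cos_neg] at this
      simpa [neg_sq] using this
  have heq : 1 - 4 / π ^ 2 * y ^ 2 = 4 * s * (1 - s) := by
    rw [hy]; field_simp; ring
  rw [hsin]
  linarith [heq ▸ hcos]

lemma beta_sum_le {s : ℝ} (h0 : 0 < s) (h1 : s < 1) :
    Real.sin (π * (1 - s)) / (π * (1 - s)) + Real.sin (π * s) / (π * s) ≤ 4 / π := by
  have hπ : 0 < π := Real.pi_pos
  have hs1 : 0 < 1 - s := by linarith
  have h1s : Real.sin (π * (1 - s)) = Real.sin (π * s) := by
    rw [show π * (1 - s) = π - π * s by ring, Real.sin_pi_sub]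
  rw [h1s]
  have hsin := sin_le_parab h0 h1
  rw [div_add_div _ _ (by positivity) (by positivity), div_le_div_iff₀ (by positivity) hπ]
  nlinarith [sq_nonneg π, mul_pos h0 hs1]



variable {N : ℕ} {M S : Matrix (Fin N) (Fin N) ℝ}

lemma qnn (hM : M.PosSemidef) (x : Fin N → ℝ) : 0 ≤ x ⬝ᵥ M.mulVec x := by
  simpa using hM.dotProduct_mulVec_nonneg x

lemma qpos (hM : M.PosDef) {x : Fin N → ℝ} (hx : x ≠ 0) : 0 < x ⬝ᵥ M.mulVec x := by
  simpa using hM.dotProduct_mulVec_pos hx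

lemma normWeighted_sq (hM : M.PosSemidef) (x : Fin N → ℝ) :
    normWeighted M x ^ 2 = x ⬝ᵥ M.mulVec x :=
  Real.sq_sqrt (qnn hM x)

lemma dot_symm (hM : M.IsHermitian) (x y : Fin N → ℝ) :
    x ⬝ᵥ M.mulVec y = y ⬝ᵥ M.mulVec x := by
  have hMt : Mᵀ = M := by
    rw [← Matrix.conjTranspose_eq_transpose_of_trivial]; exact hM
  rw [Matrix.dotProduct_mulVec, ← Matrix.mulVec_transpose, hMt, dotProduct_comm]

lemma cs_aux (hM : M.PosSemidef) (x y : Fin N → ℝ) :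
    (x ⬝ᵥ M.mulVec y) ^ 2 ≤ (x ⬝ᵥ M.mulVec x) * (y ⬝ᵥ M.mulVec y) := by
  set a := y ⬝ᵥ M.mulVec y with ha
  set b := x ⬝ᵥ M.mulVec y with hb
  set c := x ⬝ᵥ M.mulVec x with hc
  have ha0 : 0 ≤ a := qnn hM y
  have hc0 : 0 ≤ c := qnn hM x
  have quad : ∀ t : ℝ, 0 ≤ c + 2 * b * t + a * t ^ 2 := by
    intro t
    have h := qnn hM (x + t • y)
    have hyx : y ⬝ᵥ M.mulVec x = b := dot_symm hM.1 y x
    simp only [Matrix.mulVec_add, Matrix.mulVec_smul, dotProduct_add, add_dotProduct,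
      dotProduct_smul, smul_dotProduct, smul_eq_mul, hyx] at h
    rw [← ha, ← hb, ← hc] at h
    nlinarith [h]
  rcases eq_or_lt_of_le ha0 with ha' | ha'
  · have hb0 : b = 0 := by
      by_contra hb0
      have h1 := quad (-(c + 1) / (2 * b))
      rw [← ha'] at h1
      have he : 2 * b * (-(c + 1) / (2 * b)) = -(c + 1) := by
        field_simp
      rw [he] at h1
      nlinarith
    rw [hb0]; nlinarith
  · have h1 := quad (-b / a)
    have he : c + 2 * b * (-b / a) + a * (-b / a) ^ 2 = c - b ^ 2 / a := by
      field_simp; ring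
    rw [he] at h1
    have h2 := (div_le_iff₀ ha').1 (by linarith : b ^ 2 / a ≤ c)
    linarith

open scoped MatrixOrder in
lemma exists_TG (hM : M.PosDef) :
    ∃ (T : (Fin N → ℝ) →L[ℝ] EuclideanSpace ℝ (Fin N)) (κ : ℝ), 0 ≤ κ ∧
      (∀ x, ‖T x‖ = normWeighted M x) ∧ (∀ x, ‖x‖ ≤ κ * normWeighted M x) := by
  set R := CFC.sqrt M with hR
  have hRsym : Rᵀ = R := by
    rw [← Matrix.conjTranspose_eq_transpose_of_trivial]
    exact (CFC.sqrt_nonneg M).posSemidef.1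
  have hRR : R * R = M := CFC.sqrt_mul_sqrt_self M hM.posSemidef.nonneg
  have idq : ∀ x : Fin N → ℝ, (R.mulVec x) ⬝ᵥ (R.mulVec x) = x ⬝ᵥ M.mulVec x := by
    intro x
    rw [Matrix.dotProduct_mulVec, ← Matrix.mulVec_transpose, hRsym,
      Matrix.mulVec_mulVec, hRR, dotProduct_comm]
  have hdet : R.det ≠ 0 := by
    intro h
    have : M.det = 0 := by rw [← hRR, Matrix.det_mul, h, zero_mul]
    exact hM.det_pos.ne' this
  set T₀ : (Fin N → ℝ) →ₗ[ℝ] EuclideanSpace ℝ (Fin N) :=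
    (WithLp.linearEquiv 2 ℝ (Fin N → ℝ)).symm.toLinearMap ∘ₗ R.mulVecLin with hT₀
  set G₀ : EuclideanSpace ℝ (Fin N) →ₗ[ℝ] (Fin N → ℝ) :=
    R⁻¹.mulVecLin ∘ₗ (WithLp.linearEquiv 2 ℝ (Fin N → ℝ)).toLinearMap with hG₀
  set T := LinearMap.toContinuousLinearMap T₀ with hT
  set G := LinearMap.toContinuousLinearMap G₀ with hG
  have hTx : ∀ x, ‖T x‖ = normWeighted M x := by
    intro x
    have : T x = (WithLp.equiv 2 (Fin N → ℝ)).symm (R.mulVec x) := rfl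
    rw [this, EuclideanSpace.norm_eq, normWeighted]
    congr 1
    rw [← idq x, dotProduct]
    apply Finset.sum_congr rfl
    intro i _
    simp [Real.norm_eq_abs, sq_abs, pow_two]
  have hGT : ∀ x, G (T x) = x := by
    intro x
    show R⁻¹.mulVec (R.mulVec x) = x
    rw [Matrix.mulVec_mulVec, Matrix.nonsing_inv_mul R (isUnit_iff_ne_zero.2 hdet),
      Matrix.one_mulVec]
  refine ⟨T, ‖G‖, norm_nonneg _, hTx, fun x => ?_⟩
  calc ‖x‖ = ‖G (T x)‖ := by rw [hGT]
    _ ≤ ‖G‖ * ‖T x‖ := G.le_opNorm _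
    _ = ‖G‖ * normWeighted M x := by rw [hTx]

lemma exists_eps (hS : S.PosDef) (hM : M.PosDef) :
    ∃ ε : ℝ, 0 < ε ∧ ∀ x, ε * (x ⬝ᵥ M.mulVec x) ≤ x ⬝ᵥ S.mulVec x := by
  obtain ⟨TS, κ, hκ0, hTS, hκ⟩ := exists_TG hS
  obtain ⟨TM, κ', _, hTM, _⟩ := exists_TG hM
  refine ⟨((κ ^ 2 + 1) * (‖TM‖ ^ 2 + 1))⁻¹, by positivity, fun x => ?_⟩
  have hqS : x ⬝ᵥ S.mulVec x = ‖TS x‖ ^ 2 := by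
    rw [hTS, normWeighted_sq hS.posSemidef]
  have hqM : x ⬝ᵥ M.mulVec x = ‖TM x‖ ^ 2 := by
    rw [hTM, normWeighted_sq hM.posSemidef]
  rw [hqS, hqM, inv_mul_le_iff₀ (by positivity)]
  have h1 : ‖TM x‖ ≤ ‖TM‖ * ‖x‖ := TM.le_opNorm x
  have h2 : ‖x‖ ≤ κ * ‖TS x‖ := by rw [hTS]; exact hκ x
  nlinarith [norm_nonneg (TM x), norm_nonneg x, norm_nonneg (TS x), norm_nonneg TM,
    sq_nonneg (‖TM‖ * κ), sq_nonneg ‖TS x‖, mul_le_mul h1 h1 (norm_nonneg _) (by positivity),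
    mul_le_mul h2 h2 (norm_nonneg _) (by positivity),
    mul_le_mul_of_nonneg_left (mul_le_mul h2 h2 (norm_nonneg _) (by positivity)) (sq_nonneg ‖TM‖)]

lemma lamMinGen_mul_le (hS : S.PosDef) (hM : M.PosDef) (x : Fin N → ℝ) :
    lamMinGen S M * (x ⬝ᵥ M.mulVec x) ≤ x ⬝ᵥ S.mulVec x := by
  rcases eq_or_ne x 0 with rfl | hx
  · simp
  · have hm : 0 < x ⬝ᵥ M.mulVec x := qpos hM hx
    have hbdd : BddBelow ((fun x : Fin N → ℝ => (x ⬝ᵥ S.mulVec x) / (x ⬝ᵥ M.mulVec x)) '' {x | x ≠ 0}) := by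
      refine ⟨0, fun r hr => ?_⟩
      obtain ⟨y, hy, rfl⟩ := hr
      exact div_nonneg (qnn hS.posSemidef y) (qnn hM.posSemidef y)
    have hle : lamMinGen S M ≤ (x ⬝ᵥ S.mulVec x) / (x ⬝ᵥ M.mulVec x) :=
      csInf_le hbdd ⟨x, hx, rfl⟩
    calc lamMinGen S M * (x ⬝ᵥ M.mulVec x)
        ≤ (x ⬝ᵥ S.mulVec x) / (x ⬝ᵥ M.mulVec x) * (x ⬝ᵥ M.mulVec x) :=
          mul_le_mul_of_nonneg_right hle hm.le
      _ = x ⬝ᵥ S.mulVec x := div_mul_cancel₀ _ hm.ne'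

lemma lamMinGen_pos (hS : S.PosDef) (hM : M.PosDef) (hN : 0 < N) :
    0 < lamMinGen S M := by
  obtain ⟨ε, hε, hεle⟩ := exists_eps hS hM
  have hne : ((fun x : Fin N → ℝ => (x ⬝ᵥ S.mulVec x) / (x ⬝ᵥ M.mulVec x)) '' {x | x ≠ 0}).Nonempty := by
    refine ⟨_, ⟨Pi.single ⟨0, hN⟩ 1, fun h => ?_, rfl⟩⟩
    have := congrFun h ⟨0, hN⟩
    simp at this
  have : ε ≤ lamMinGen S M := by
    refine le_csInf hne fun r hr => ?_
    obtain ⟨y, hy, rfl⟩ := hr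
    have hm : 0 < y ⬝ᵥ M.mulVec y := qpos hM hy
    rw [le_div_iff₀ hm]
    exact hεle y
  linarith

lemma sol_bound (hM : M.PosDef) {A : Matrix (Fin N) (Fin N) ℝ} (hA : A.PosDef)
    {c : ℝ} (hc : 0 < c) (hAc : ∀ x, c * (x ⬝ᵥ M.mulVec x) ≤ x ⬝ᵥ A.mulVec x)
    (f : Fin N → ℝ) :
    normWeighted M (A⁻¹.mulVec f) ≤ (1 / c) * normWeighted M⁻¹ f := by
  set w := A⁻¹.mulVec f with hw
  have hf : A.mulVec w = f := by
    rw [hw, Matrix.mulVec_mulVec, Matrix.mul_nonsing_inv A (isUnit_iff_ne_zero.2 hA.det_pos.ne'),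
      Matrix.one_mulVec]
  set u := M⁻¹.mulVec f with hu
  have hMu : M.mulVec u = f := by
    rw [hu, Matrix.mulVec_mulVec, Matrix.mul_nonsing_inv M (isUnit_iff_ne_zero.2 hM.det_pos.ne'),
      Matrix.one_mulVec]
  have huMu : u ⬝ᵥ M.mulVec u = f ⬝ᵥ M⁻¹.mulVec f := by
    rw [hMu, dotProduct_comm]
  set a := normWeighted M w with ha
  set b := normWeighted M⁻¹ f with hb
  have ha0 : 0 ≤ a := Real.sqrt_nonneg _
  have hb0 : 0 ≤ b := Real.sqrt_nonneg _
  have ha2 : a ^ 2 = w ⬝ᵥ M.mulVec w := normWeighted_sq hM.posSemidef w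
  have hb2 : b ^ 2 = f ⬝ᵥ M⁻¹.mulVec f := normWeighted_sq hM.inv.posSemidef f
  have hcs : (w ⬝ᵥ M.mulVec u) ^ 2 ≤ a ^ 2 * b ^ 2 := by
    rw [ha2, hb2, ← huMu]
    exact cs_aux hM.posSemidef w u
  have hwf : w ⬝ᵥ f = w ⬝ᵥ M.mulVec u := by rw [hMu]
  have hlow : c * a ^ 2 ≤ w ⬝ᵥ f := by
    rw [ha2, ← hf]
    exact hAc w
  have hub : w ⬝ᵥ f ≤ a * b := by
    nlinarith [hcs, hwf, mul_nonneg ha0 hb0]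
  rcases eq_or_lt_of_le ha0 with ha' | ha'
  · rw [← ha']; positivity
  · have hca : c * a ≤ b := by
      have := hlow.trans hub
      nlinarith
    rw [one_div, inv_mul_eq_div, le_div_iff₀ hc]
    linarith


lemma smul_posSemidef (hM : M.PosSemidef) {c : ℝ} (hc : 0 ≤ c) : (c • M).PosSemidef := by
  refine Matrix.PosSemidef.of_dotProduct_mulVec_nonneg ?_ ?_
  · show (c • M)ᴴ = c • M
    rw [Matrix.conjTranspose_smul, star_trivial, hM.1.eq]
  · intro x
    have := hM.dotProduct_mulVec_nonneg x
    simp only [Matrix.smul_mulVec, dotProduct_smul, smul_eq_mul]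
    exact mul_nonneg hc this

lemma AMinus_posDef (hS : S.PosDef) (hM : M.PosDef) (y : ℝ) :
    (S + Real.exp (-y) • M).PosDef :=
  hS.add_posSemidef (smul_posSemidef hM.posSemidef (Real.exp_nonneg _))

lemma APlus_posDef (hS : S.PosDef) (hM : M.PosDef) (y : ℝ) :
    (Real.exp (-y) • S + M).PosDef :=
  Matrix.PosDef.posSemidef_add (smul_posSemidef hS.posSemidef (Real.exp_nonneg _)) hM

lemma wMinus_bound (hS : S.PosDef) (hM : M.PosDef) (f : Fin N → ℝ) (hN : 0 < N) (y : ℝ) :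
    normWeighted M (wMinus S M f y) ≤
      max 1 (1 / lamMinGen S M) * normWeighted M⁻¹ f := by
  have hlam := lamMinGen_pos hS hM hN
  have h1 : normWeighted M (wMinus S M f y) ≤ (1 / lamMinGen S M) * normWeighted M⁻¹ f := by
    refine sol_bound hM (AMinus_posDef hS hM y) hlam (fun x => ?_) f
    have h2 := lamMinGen_mul_le hS hM x
    have h3 : 0 ≤ Real.exp (-y) * (x ⬝ᵥ M.mulVec x) :=
      mul_nonneg (Real.exp_nonneg _) (qnn hM.posSemidef x)
    rw [Matrix.add_mulVec, dotProduct_add, Matrix.smul_mulVec, dotProduct_smul,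
      smul_eq_mul]
    linarith
  refine h1.trans (mul_le_mul_of_nonneg_right (le_max_right _ _) (Real.sqrt_nonneg _))

lemma wPlus_bound (hS : S.PosDef) (hM : M.PosDef) (f : Fin N → ℝ) (y : ℝ) :
    normWeighted M (wPlus S M f y) ≤
      max 1 (1 / lamMinGen S M) * normWeighted M⁻¹ f := by
  have h1 : normWeighted M (wPlus S M f y) ≤ (1 / 1) * normWeighted M⁻¹ f := by
    refine sol_bound hM (APlus_posDef hS hM y) one_pos (fun x => ?_) f
    have h3 : 0 ≤ Real.exp (-y) * (x ⬝ᵥ S.mulVec x) :=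
      mul_nonneg (Real.exp_nonneg _) (qnn hS.posSemidef x)
    rw [Matrix.add_mulVec, dotProduct_add, Matrix.smul_mulVec, dotProduct_smul,
      smul_eq_mul]
    linarith
  rw [div_one, one_mul] at h1
  refine h1.trans ?_
  have := Real.sqrt_nonneg (f ⬝ᵥ M⁻¹.mulVec f)
  exact le_mul_of_one_le_left (Real.sqrt_nonneg _) (le_max_left _ _)

lemma cont_inv_mulVec (f : Fin N → ℝ) {A : ℝ → Matrix (Fin N) (Fin N) ℝ}
    (hA : Continuous A) (hdet : ∀ t, (A t).det ≠ 0) :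
    Continuous fun t => (A t)⁻¹.mulVec f := by
  have hinv : Continuous fun t => (A t)⁻¹ := by
    have : (fun t => (A t)⁻¹) = fun t => ((A t).det)⁻¹ • (A t).adjugate := by
      funext t
      rw [Matrix.inv_def, Ring.inverse_eq_inv']
    rw [this]
    exact (hA.matrix_det.inv₀ hdet).smul hA.matrix_adjugate
  exact hinv.matrix_mulVec continuous_const

lemma cont_wMinus (hS : S.PosDef) (hM : M.PosDef) (f : Fin N → ℝ) :
    Continuous (wMinus S M f) := by
  refine cont_inv_mulVec f ?_ (fun t => (AMinus_posDef hS hM t).det_pos.ne')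
  exact continuous_const.add ((Real.continuous_exp.comp continuous_neg).smul continuous_const)

lemma cont_wPlus (hS : S.PosDef) (hM : M.PosDef) (f : Fin N → ℝ) :
    Continuous (wPlus S M f) := by
  refine cont_inv_mulVec f ?_ (fun t => (APlus_posDef hS hM t).det_pos.ne')
  exact ((Real.continuous_exp.comp continuous_neg).smul continuous_const).add continuous_const

lemma quad_bound {T : (Fin N → ℝ) →L[ℝ] EuclideanSpace ℝ (Fin N)}
    (hT : ∀ x, ‖T x‖ = normWeighted M x)
    {P : ℕ} (w : Fin P → Fin N → ℝ) (τ : Fin P → ℝ) (hτ : ∀ j, 0 ≤ τ j)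
    (hτsum : ∑ j, τ j ≤ 1) {B : ℝ} (hB : 0 ≤ B)
    (hw : ∀ j, normWeighted M (w j) ≤ B) :
    ‖T (∑ j, τ j • w j)‖ ≤ B := by
  rw [map_sum]
  refine (norm_sum_le _ _).trans ?_
  calc ∑ j, ‖T (τ j • w j)‖ = ∑ j, τ j * normWeighted M (w j) := by
        refine Finset.sum_congr rfl fun j _ => ?_
        rw [T.map_smul, norm_smul, Real.norm_eq_abs, abs_of_nonneg (hτ j), hT]
    _ ≤ ∑ j, τ j * B := by
        refine Finset.sum_le_sum fun j _ => mul_le_mul_of_nonneg_left (hw j) (hτ j)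
    _ = (∑ j, τ j) * B := by rw [Finset.sum_mul]
    _ ≤ 1 * B := mul_le_mul_of_nonneg_right hτsum hB
    _ = B := one_mul B

lemma int_bound {T : (Fin N → ℝ) →L[ℝ] EuclideanSpace ℝ (Fin N)} {κ : ℝ} (hκ0 : 0 ≤ κ)
    (hT : ∀ x, ‖T x‖ = normWeighted M x) (hκ : ∀ x, ‖x‖ ≤ κ * normWeighted M x)
    {w : ℝ → Fin N → ℝ} (hw_cont : Continuous w) {B : ℝ} (hB : 0 ≤ B)
    (hwB : ∀ y, 0 ≤ y → normWeighted M (w y) ≤ B) {c : ℝ} (hc : 0 < c) :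
    ‖T (∫ t in Set.Ioi (0:ℝ), Real.exp (-t) • w (t / c))‖ ≤ B := by
  set g : ℝ → Fin N → ℝ := fun t => Real.exp (-t) • w (t / c) with hg
  have hgcont : Continuous g :=
    (Real.continuous_exp.comp continuous_neg).smul (hw_cont.comp (continuous_id.div_const c))
  have hmaj : IntegrableOn (fun t : ℝ => κ * B * Real.exp (-t)) (Set.Ioi 0) := by
    have h0 : IntegrableOn (fun t : ℝ => Real.exp (-t)) (Set.Ioi (0:ℝ)) := by
      have := exp_neg_integrableOn_Ioi 0 (one_pos (α := ℝ))
      simpa using this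
    exact h0.const_mul _
  have hptw : ∀ t ∈ Set.Ioi (0:ℝ), ‖g t‖ ≤ κ * B * Real.exp (-t) := by
    intro t ht
    rw [hg]
    simp only [norm_smul, Real.norm_eq_abs, Real.abs_exp]
    have h1 : ‖w (t / c)‖ ≤ κ * B := by
      refine (hκ _).trans ?_
      exact mul_le_mul_of_nonneg_left (hwB _ (div_nonneg (le_of_lt ht) hc.le)) hκ0
    calc Real.exp (-t) * ‖w (t / c)‖ ≤ Real.exp (-t) * (κ * B) :=
          mul_le_mul_of_nonneg_left h1 (Real.exp_nonneg _)
      _ = κ * B * Real.exp (-t) := by ring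
  have hint : IntegrableOn g (Set.Ioi (0:ℝ)) := by
    refine Integrable.mono' hmaj hgcont.aestronglyMeasurable ?_
    exact (ae_restrict_iff' measurableSet_Ioi).2 (Filter.Eventually.of_forall hptw)
  rw [(ContinuousLinearMap.integral_comp_comm T hint).symm]
  refine (norm_integral_le_integral_norm _).trans ?_
  have hTptw : ∀ t ∈ Set.Ioi (0:ℝ), ‖T (g t)‖ ≤ B * Real.exp (-t) := by
    intro t ht
    rw [hg]
    simp only [T.map_smul, norm_smul, Real.norm_eq_abs, Real.abs_exp, hT]
    calc Real.exp (-t) * normWeighted M (w (t / c))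
        ≤ Real.exp (-t) * B :=
          mul_le_mul_of_nonneg_left (hwB _ (div_nonneg (le_of_lt ht) hc.le)) (Real.exp_nonneg _)
      _ = B * Real.exp (-t) := by ring
  have hTint : IntegrableOn (fun t => ‖T (g t)‖) (Set.Ioi (0:ℝ)) :=
    (T.integrable_comp hint).norm
  have hBint : IntegrableOn (fun t : ℝ => B * Real.exp (-t)) (Set.Ioi 0) := by
    have h0 : IntegrableOn (fun t : ℝ => Real.exp (-t)) (Set.Ioi (0:ℝ)) := by
      have := exp_neg_integrableOn_Ioi 0 (one_pos (α := ℝ))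
      simpa using this
    exact h0.const_mul _
  calc (∫ t in Set.Ioi (0:ℝ), ‖T (g t)‖)
      ≤ ∫ t in Set.Ioi (0:ℝ), B * Real.exp (-t) :=
        setIntegral_mono_on hTint hBint measurableSet_Ioi hTptw
    _ = B * ∫ t in Set.Ioi (0:ℝ), Real.exp (-t) := by rw [integral_const_mul]
    _ = B := by rw [integral_exp_neg_Ioi_zero, mul_one]

/-- Remark after Proposition 4.1: the discrepancy between the fully discrete solution
`u(s)` and the semi-discrete solution `ũ(s)` is bounded by
`(8/π) max(1, 1/λ_min(S,M)) ‖f‖_{M⁻¹}`, uniformly in `s ∈ (0,1)` and in all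
discretization parameters. -/
theorem quad_error_uniform {N : ℕ} (S M : Matrix (Fin N) (Fin N) ℝ)
    (hS : S.PosDef) (hM : M.PosDef) (f : Fin N → ℝ)
    (Mm Mp : ℕ) (ym : Fin Mm → ℝ) (τm : Fin Mm → ℝ) (yp : Fin Mp → ℝ) (τp : Fin Mp → ℝ)
    (hym : ∀ j, 0 ≤ ym j) (hyp : ∀ j, 0 ≤ yp j)
    (hτm : ∀ j, 0 ≤ τm j) (hτp : ∀ j, 0 ≤ τp j)
    (hτmsum : ∑ j, τm j ≤ 1) (hτpsum : ∑ j, τp j ≤ 1)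
    (s : ℝ) (hs : s ∈ Set.Ioo (0:ℝ) 1) :
    normWeighted M
        ((beta0 (1 - s) • ∑ j, τm j • wMinus S M f (ym j / (1 - s)) +
            beta0 s • ∑ j, τp j • wPlus S M f (yp j / s)) -
          (beta0 (1 - s) •
              (∫ t in Set.Ioi (0:ℝ), Real.exp (-t) • wMinus S M f (t / (1 - s))) +
            beta0 s •
              (∫ t in Set.Ioi (0:ℝ), Real.exp (-t) • wPlus S M f (t / s)))) ≤
      (8 / Real.pi) * max 1 (1 / lamMinGen S M) * normWeighted M⁻¹ f := by
  obtain ⟨hs0, hs1⟩ := hs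
  rcases Nat.eq_zero_or_pos N with hN | hN
  · subst hN
    simp [normWeighted, dotProduct]
  -- setup
  obtain ⟨T, κ, hκ0, hT, hκ⟩ := exists_TG hM
  set C := max 1 (1 / lamMinGen S M) with hC
  set F := normWeighted M⁻¹ f with hF
  have hF0 : 0 ≤ F := Real.sqrt_nonneg _
  have hC0 : 0 ≤ C := le_trans zero_le_one (le_max_left _ _)
  have hCF0 : 0 ≤ C * F := mul_nonneg hC0 hF0
  have hwm : ∀ y : ℝ, normWeighted M (wMinus S M f y) ≤ C * F :=
    fun y => wMinus_bound hS hM f hN y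
  have hwp : ∀ y : ℝ, normWeighted M (wPlus S M f y) ≤ C * F :=
    fun y => wPlus_bound hS hM f y
  have hs1' : 0 < 1 - s := by linarith
  -- the four pieces
  have hQm : ‖T (∑ j, τm j • wMinus S M f (ym j / (1 - s)))‖ ≤ C * F :=
    quad_bound hT _ τm hτm hτmsum hCF0 (fun j => hwm _)
  have hQp : ‖T (∑ j, τp j • wPlus S M f (yp j / s))‖ ≤ C * F :=
    quad_bound hT _ τp hτp hτpsum hCF0 (fun j => hwp _)
  have hIm : ‖T (∫ t in Set.Ioi (0:ℝ), Real.exp (-t) • wMinus S M f (t / (1 - s)))‖ ≤ C * F :=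
    int_bound hκ0 hT hκ (cont_wMinus hS hM f) hCF0 (fun y _ => hwm y) hs1'
  have hIp : ‖T (∫ t in Set.Ioi (0:ℝ), Real.exp (-t) • wPlus S M f (t / s))‖ ≤ C * F :=
    int_bound hκ0 hT hκ (cont_wPlus hS hM f) hCF0 (fun y _ => hwp y) hs0
  -- beta facts
  have hπ : 0 < π := Real.pi_pos
  have hbm0 : 0 ≤ beta0 (1 - s) := by
    unfold beta0
    apply div_nonneg _ (by positivity)
    exact Real.sin_nonneg_of_nonneg_of_le_pi (by positivity) (by nlinarith)
  have hbp0 : 0 ≤ beta0 s := by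
    unfold beta0
    apply div_nonneg _ (by positivity)
    exact Real.sin_nonneg_of_nonneg_of_le_pi (by positivity) (by nlinarith)
  have hbsum : beta0 (1 - s) + beta0 s ≤ 4 / π := by
    unfold beta0
    exact beta_sum_le hs0 hs1
  -- assemble
  rw [← hT]
  set Qm := ∑ j, τm j • wMinus S M f (ym j / (1 - s)) with hQmdef
  set Qp := ∑ j, τp j • wPlus S M f (yp j / s) with hQpdef
  set Im := ∫ t in Set.Ioi (0:ℝ), Real.exp (-t) • wMinus S M f (t / (1 - s)) with hImdef
  set Ip := ∫ t in Set.Ioi (0:ℝ), Real.exp (-t) • wPlus S M f (t / s) with hIpdef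
  have hsplit : T (beta0 (1 - s) • Qm + beta0 s • Qp - (beta0 (1 - s) • Im + beta0 s • Ip)) =
      beta0 (1 - s) • (T Qm - T Im) + beta0 s • (T Qp - T Ip) := by
    rw [map_sub, map_add, map_add, T.map_smul, T.map_smul, T.map_smul, T.map_smul]
    module
  rw [hsplit]
  calc ‖beta0 (1 - s) • (T Qm - T Im) + beta0 s • (T Qp - T Ip)‖
      ≤ ‖beta0 (1 - s) • (T Qm - T Im)‖ + ‖beta0 s • (T Qp - T Ip)‖ := norm_add_le _ _
    _ = beta0 (1 - s) * ‖T Qm - T Im‖ + beta0 s * ‖T Qp - T Ip‖ := by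
        rw [norm_smul, norm_smul, Real.norm_eq_abs, Real.norm_eq_abs,
          abs_of_nonneg hbm0, abs_of_nonneg hbp0]
    _ ≤ beta0 (1 - s) * (2 * (C * F)) + beta0 s * (2 * (C * F)) := by
        have h1 : ‖T Qm - T Im‖ ≤ 2 * (C * F) := by
          refine (norm_sub_le _ _).trans ?_; linarith
        have h2 : ‖T Qp - T Ip‖ ≤ 2 * (C * F) := by
          refine (norm_sub_le _ _).trans ?_; linarith
        have := mul_le_mul_of_nonneg_left h1 hbm0
        have := mul_le_mul_of_nonneg_left h2 hbp0
        linarith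
    _ = (beta0 (1 - s) + beta0 s) * (2 * (C * F)) := by ring
    _ ≤ 4 / π * (2 * (C * F)) := by
        refine mul_le_mul_of_nonneg_right hbsum (by positivity)
    _ = 8 / π * C * F := by field_simp; ring
end
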